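/- Let R and S be two rings, T a right R-module, E an R-S-bimodule, and κ a regular cardinal. If T is κ-presentable as a right R-module and E is κ-presentable as a right S-module, then the right S-module T ⊗_R E is κ-presentable. -/

import Mathlib

open CategoryTheory TensorProduct

universe u

set_option maxHeartbeats 1000000
noncomputable section

namespace NCT

variable (R : Type u) [Ring R]

/-- The subgroup of relations defining the balanced tensor product `M ⊗_R N`
of a right `R`-module `M` and a left `R`-module `N`. -/
def rel (M N : Type u) [AddCommGroup M] [Module Rᵐᵒᵖ M] [AddCommGroup N] [Module R N] :
    AddSubgroup (M ⊗[ℤ] N) :=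
  AddSubgroup.closure {x | ∃ (r : R) (m : M) (n : N),
    x = (MulOpposite.op r • m) ⊗ₜ[ℤ] n - m ⊗ₜ[ℤ] (r • n)}

/-- The balanced tensor product `M ⊗_R N` over a (possibly noncommutative) ring `R`. -/
def Tens (M N : Type u) [AddCommGroup M] [Module Rᵐᵒᵖ M] [AddCommGroup N] [Module R N] :
    Type u :=
  (M ⊗[ℤ] N) ⧸ rel R M N

instance (M N : Type u) [AddCommGroup M] [Module Rᵐᵒᵖ M] [AddCommGroup N] [Module R N] :
    AddCommGroup (Tens R M N) :=
  inferInstanceAs (AddCommGroup ((M ⊗[ℤ] N) ⧸ rel R M N))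

variable {R}

variable {M M' M'' N N' N'' : Type u}
  [AddCommGroup M] [Module Rᵐᵒᵖ M] [AddCommGroup M'] [Module Rᵐᵒᵖ M']
  [AddCommGroup M''] [Module Rᵐᵒᵖ M'']
  [AddCommGroup N] [Module R N] [AddCommGroup N'] [Module R N']
  [AddCommGroup N''] [Module R N'']

/-- The canonical projection. -/
def mk : M ⊗[ℤ] N →+ Tens R M N := QuotientAddGroup.mk' (rel R M N)

lemma mk_surjective : Function.Surjective (mk (R := R) (M := M) (N := N)) :=
  QuotientAddGroup.mk'_surjective _

private def intMap (f : M →ₗ[Rᵐᵒᵖ] M') (g : N →ₗ[R] N') : M ⊗[ℤ] N →ₗ[ℤ] M' ⊗[ℤ] N' :=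
  TensorProduct.map f.toAddMonoidHom.toIntLinearMap g.toAddMonoidHom.toIntLinearMap

private lemma intMap_id :
    intMap (LinearMap.id : M →ₗ[Rᵐᵒᵖ] M) (LinearMap.id : N →ₗ[R] N) = LinearMap.id :=
  TensorProduct.ext' fun _ _ => rfl

private lemma intMap_comp (f' : M' →ₗ[Rᵐᵒᵖ] M'') (f : M →ₗ[Rᵐᵒᵖ] M')
    (g' : N' →ₗ[R] N'') (g : N →ₗ[R] N') :
    intMap (f'.comp f) (g'.comp g) = (intMap f' g').comp (intMap f g) :=
  TensorProduct.ext' fun _ _ => rfl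

private lemma rel_le (f : M →ₗ[Rᵐᵒᵖ] M') (g : N →ₗ[R] N') :
    rel R M N ≤ (rel R M' N').comap (intMap f g).toAddMonoidHom := by
  rw [rel, AddSubgroup.closure_le]
  rintro x ⟨r, m, n, rfl⟩
  simp only [SetLike.mem_coe, AddSubgroup.mem_comap, LinearMap.toAddMonoidHom_coe, map_sub]
  apply AddSubgroup.subset_closure
  refine ⟨r, f m, g n, ?_⟩
  show f (MulOpposite.op r • m) ⊗ₜ[ℤ] g n - f m ⊗ₜ[ℤ] g (r • n) = _
  simp [f.map_smul, g.map_smul]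

/-- Functoriality of the balanced tensor product. -/
def tmap (f : M →ₗ[Rᵐᵒᵖ] M') (g : N →ₗ[R] N') : Tens R M N →+ Tens R M' N' :=
  QuotientAddGroup.map _ _ (intMap f g).toAddMonoidHom (rel_le f g)

lemma tmap_mk (f : M →ₗ[Rᵐᵒᵖ] M') (g : N →ₗ[R] N') (x : M ⊗[ℤ] N) :
    tmap f g (mk x) = mk (intMap f g x) := rfl

lemma tmap_id_apply (x : Tens R M N) :
    tmap (LinearMap.id : M →ₗ[Rᵐᵒᵖ] M) (LinearMap.id : N →ₗ[R] N) x = x := by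
  obtain ⟨y, rfl⟩ := mk_surjective x
  rw [tmap_mk, intMap_id]
  rfl

lemma tmap_tmap (f' : M' →ₗ[Rᵐᵒᵖ] M'') (f : M →ₗ[Rᵐᵒᵖ] M')
    (g' : N' →ₗ[R] N'') (g : N →ₗ[R] N') (x : Tens R M N) :
    tmap f' g' (tmap f g x) = tmap (f'.comp f) (g'.comp g) x := by
  obtain ⟨y, rfl⟩ := mk_surjective x
  rw [tmap_mk, tmap_mk, tmap_mk, intMap_comp]
  rfl

lemma tmap_add_left (f₁ f₂ : M →ₗ[Rᵐᵒᵖ] M') (g : N →ₗ[R] N') :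
    tmap (f₁ + f₂) g = tmap f₁ g + tmap f₂ g := by
  ext x
  obtain ⟨y, rfl⟩ := mk_surjective x
  have h : intMap (f₁ + f₂) g = intMap f₁ g + intMap f₂ g := by
    apply TensorProduct.ext'
    intro m n
    show (f₁ + f₂) m ⊗ₜ[ℤ] g n = f₁ m ⊗ₜ[ℤ] g n + f₂ m ⊗ₜ[ℤ] g n
    simp [intMap, add_tmul]
  simp only [AddMonoidHom.add_apply, tmap_mk, h, LinearMap.add_apply]
  rw [map_add]

lemma tmap_add_right (f : M →ₗ[Rᵐᵒᵖ] M') (g₁ g₂ : N →ₗ[R] N') :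
    tmap f (g₁ + g₂) = tmap f g₁ + tmap f g₂ := by
  ext x
  obtain ⟨y, rfl⟩ := mk_surjective x
  have h : intMap f (g₁ + g₂) = intMap f g₁ + intMap f g₂ := by
    apply TensorProduct.ext'
    intro m n
    show f m ⊗ₜ[ℤ] (g₁ + g₂) n = f m ⊗ₜ[ℤ] g₁ n + f m ⊗ₜ[ℤ] g₂ n
    simp [intMap, tmul_add]
  simp only [AddMonoidHom.add_apply, tmap_mk, h, LinearMap.add_apply]
  rw [map_add]


lemma tmap_zero_left (g : N →ₗ[R] N') :
    tmap (0 : M →ₗ[Rᵐᵒᵖ] M') g = 0 := by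
  ext x
  obtain ⟨y, rfl⟩ := mk_surjective x
  have h : intMap (0 : M →ₗ[Rᵐᵒᵖ] M') g = 0 := by
    apply TensorProduct.ext'
    intro m n
    show (0 : M →ₗ[Rᵐᵒᵖ] M') m ⊗ₜ[ℤ] g n = 0
    simp [intMap]
  rw [tmap_mk, h]
  rfl

lemma tmap_zero_right (f : M →ₗ[Rᵐᵒᵖ] M') :
    tmap f (0 : N →ₗ[R] N') = 0 := by
  ext x
  obtain ⟨y, rfl⟩ := mk_surjective x
  have h : intMap f (0 : N →ₗ[R] N') = 0 := by
    apply TensorProduct.ext'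
    intro m n
    show f m ⊗ₜ[ℤ] (0 : N →ₗ[R] N') n = 0
    simp [intMap]
  rw [tmap_mk, h]
  rfl

variable (R)

/-- The balanced tensor product, as a bifunctor on module categories. -/
def tensorBifunctor : ModuleCat.{u} Rᵐᵒᵖ ⥤ ModuleCat.{u} R ⥤ AddCommGrpCat.{u} where
  obj M :=
    { obj := fun N => AddCommGrpCat.of (Tens R M N)
      map := fun g => AddCommGrpCat.ofHom (tmap LinearMap.id g.hom)
      map_id := fun N => by
        ext x
        exact tmap_id_apply x
      map_comp := fun g g' => by
        ext x
        show tmap LinearMap.id (LinearMap.comp g'.hom g.hom) x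
          = tmap LinearMap.id g'.hom (tmap LinearMap.id g.hom x)
        rw [tmap_tmap, LinearMap.id_comp] }
  map f :=
    { app := fun N => AddCommGrpCat.ofHom (tmap f.hom LinearMap.id)
      naturality := fun N N' g => by
        ext x
        show tmap f.hom LinearMap.id (tmap LinearMap.id g.hom x)
          = tmap LinearMap.id g.hom (tmap f.hom LinearMap.id x)
        rw [tmap_tmap, tmap_tmap, LinearMap.id_comp, LinearMap.comp_id,
          LinearMap.id_comp, LinearMap.comp_id] }
  map_id := fun M => by
    ext N x
    exact tmap_id_apply x
  map_comp := fun f f' => by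
    ext N x
    show tmap (LinearMap.comp f'.hom f.hom) LinearMap.id x
      = tmap f'.hom LinearMap.id (tmap f.hom LinearMap.id x)
    rw [tmap_tmap, LinearMap.id_comp]

instance (M : ModuleCat.{u} Rᵐᵒᵖ) : ((tensorBifunctor R).obj M).Additive where
  map_add := by
    intro N N' g g'
    ext x
    show tmap LinearMap.id (g + g').hom x = _
    rw [ModuleCat.hom_add, tmap_add_right]
    rfl

instance (N : ModuleCat.{u} R) : ((tensorBifunctor R).flip.obj N).Additive where
  map_add := by
    intro M M' f f'
    ext x
    show tmap (f + f').hom LinearMap.id x = _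
    rw [ModuleCat.hom_add, tmap_add_left]
    rfl


instance : (tensorBifunctor R).PreservesZeroMorphisms where
  map_zero := by
    intro M M'
    ext N x
    show tmap (0 : ↑M →ₗ[Rᵐᵒᵖ] ↑M') LinearMap.id x = 0
    rw [tmap_zero_left]
    rfl

/-- A right `R`-module `M` is flat if `M ⊗_R -` preserves injectivity. -/
def FlatRight (M : Type u) [AddCommGroup M] [Module Rᵐᵒᵖ M] : Prop :=
  ∀ (N N' : Type u) [AddCommGroup N] [Module R N] [AddCommGroup N'] [Module R N']
    (g : N →ₗ[R] N'), Function.Injective g →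
      Function.Injective (tmap (LinearMap.id : M →ₗ[Rᵐᵒᵖ] M) g)

/-- A left `R`-module `N` is flat if `- ⊗_R N` preserves injectivity. -/
def FlatLeft (N : Type u) [AddCommGroup N] [Module R N] : Prop :=
  ∀ (M M' : Type u) [AddCommGroup M] [Module Rᵐᵒᵖ M] [AddCommGroup M'] [Module Rᵐᵒᵖ M']
    (f : M →ₗ[Rᵐᵒᵖ] M'), Function.Injective f →
      Function.Injective (tmap f (LinearMap.id : N →ₗ[R] N))

end NCT

open CategoryTheory

section

variable (R : Type u) [Ring R] (S : Type u) [Ring S]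
variable (E : Type u) [AddCommGroup E] [Module R E] [Module Sᵐᵒᵖ E] [SMulCommClass R Sᵐᵒᵖ E]

/-- Right multiplication by `s ∈ S` on an `R`-`S`-bimodule `E`, as an `R`-linear map. -/
def rightMulLin (s : Sᵐᵒᵖ) : E →ₗ[R] E where
  toFun e := s • e
  map_add' := smul_add s
  map_smul' r e := (smul_comm r s e).symm

lemma rightMulLin_one : rightMulLin R S E (1 : Sᵐᵒᵖ) = LinearMap.id := by
  ext e; simp [rightMulLin]

lemma rightMulLin_mul (s t : Sᵐᵒᵖ) :
    rightMulLin R S E (s * t) = (rightMulLin R S E s).comp (rightMulLin R S E t) := by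
  ext e; simp [rightMulLin, mul_smul]

lemma rightMulLin_add (s t : Sᵐᵒᵖ) :
    rightMulLin R S E (s + t) = rightMulLin R S E s + rightMulLin R S E t := by
  ext e; simp [rightMulLin, add_smul]

lemma rightMulLin_zero : rightMulLin R S E (0 : Sᵐᵒᵖ) = 0 := by
  ext e; simp [rightMulLin]

variable (T : Type u) [AddCommGroup T] [Module Rᵐᵒᵖ T]

/-- The right `S`-module structure on the balanced tensor product `T ⊗_R E` of a right
`R`-module `T` with an `R`-`S`-bimodule `E`. -/
noncomputable instance tensRightModule : Module Sᵐᵒᵖ (NCT.Tens R T E) where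
  smul s x := NCT.tmap LinearMap.id (rightMulLin R S E s) x
  one_smul x := by
    show NCT.tmap LinearMap.id (rightMulLin R S E 1) x = x
    rw [rightMulLin_one]
    exact NCT.tmap_id_apply x
  mul_smul s t x := by
    show NCT.tmap LinearMap.id (rightMulLin R S E (s * t)) x
      = NCT.tmap LinearMap.id (rightMulLin R S E s)
        (NCT.tmap LinearMap.id (rightMulLin R S E t) x)
    rw [NCT.tmap_tmap, rightMulLin_mul, LinearMap.id_comp]
  smul_zero s := map_zero _
  smul_add s x y := map_add _ x y
  add_smul s t x := by
    show NCT.tmap LinearMap.id (rightMulLin R S E (s + t)) x = _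
    rw [rightMulLin_add, NCT.tmap_add_right]
    rfl
  zero_smul x := by
    show NCT.tmap LinearMap.id (rightMulLin R S E 0) x = 0
    rw [rightMulLin_zero, NCT.tmap_zero_right]
    rfl

end

/-- A module is `κ`-presentable if it is the cokernel of a morphism of free modules each
with fewer than `κ` generators. -/
def IsKappaPresentableMod (κ : Cardinal.{u}) (A : Type u) [Ring A] (M : Type u)
    [AddCommGroup M] [Module A M] : Prop :=
  ∃ (ι σ : Type u) (_ : Cardinal.mk ι < κ) (_ : Cardinal.mk σ < κ)
    (f : (ι →₀ A) →ₗ[A] (σ →₀ A)),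
    Nonempty (M ≃ₗ[A] ((σ →₀ A) ⧸ LinearMap.range f))

namespace TensAux

open Finsupp Function MulOpposite

set_option linter.unusedSectionVars false

variable {R : Type u} [Ring R] {S : Type u} [Ring S]
variable {T : Type u} [AddCommGroup T] [Module Rᵐᵒᵖ T]
variable {E : Type u} [AddCommGroup E] [Module R E] [Module Sᵐᵒᵖ E] [SMulCommClass R Sᵐᵒᵖ E]
variable {ι σ ι' σ' : Type u}
variable (qT : (σ →₀ Rᵐᵒᵖ) →ₗ[Rᵐᵒᵖ] T) (qE : (σ' →₀ Sᵐᵒᵖ) →ₗ[Sᵐᵒᵖ] E)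
variable (f : (ι →₀ Rᵐᵒᵖ) →ₗ[Rᵐᵒᵖ] (σ →₀ Rᵐᵒᵖ)) (g : (ι' →₀ Sᵐᵒᵖ) →ₗ[Sᵐᵒᵖ] (σ' →₀ Sᵐᵒᵖ))

lemma single_eq_smul_single {α A : Type u} [Ring A] (a : α) (c : A) :
    Finsupp.single a c = c • Finsupp.single a (1 : A) := by
  rw [Finsupp.smul_single', mul_one]

lemma mk_rel (r : R) (m : T) (n : E) :
    NCT.mk (R := R) ((op r • m) ⊗ₜ[ℤ] n) = NCT.mk (R := R) (m ⊗ₜ[ℤ] (r • n)) := by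
  have h : ((op r • m) ⊗ₜ[ℤ] n - m ⊗ₜ[ℤ] (r • n)) ∈ NCT.rel R T E :=
    AddSubgroup.subset_closure ⟨r, m, n, rfl⟩
  rw [← sub_eq_zero, ← map_sub]
  exact (QuotientAddGroup.eq_zero_iff _).2 h

lemma intMap_rm_tmul (s : Sᵐᵒᵖ) (m : T) (n : E) :
    NCT.intMap (LinearMap.id (R := Rᵐᵒᵖ) (M := T)) (rightMulLin R S E s) (m ⊗ₜ[ℤ] n)
      = m ⊗ₜ[ℤ] (s • n) := by
  rfl

lemma smul_mk (s : Sᵐᵒᵖ) (y : T ⊗[ℤ] E) :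
    s • NCT.mk (R := R) y
      = NCT.mk (R := R) (NCT.intMap (LinearMap.id (R := Rᵐᵒᵖ) (M := T)) (rightMulLin R S E s) y) := by
  show NCT.tmap LinearMap.id (rightMulLin R S E s) (NCT.mk y) = _
  rw [NCT.tmap_mk]

lemma smul_mk_tmul (s : Sᵐᵒᵖ) (m : T) (n : E) :
    s • NCT.mk (R := R) (m ⊗ₜ[ℤ] n) = NCT.mk (R := R) (m ⊗ₜ[ℤ] (s • n)) := by
  rw [smul_mk, intMap_rm_tmul]

/-- The images of the standard basis vectors in `T`. -/
def tP (j : σ) : T := qT (Finsupp.single j 1)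

/-- The images of the standard basis vectors in `E`. -/
def eP (j' : σ') : E := qE (Finsupp.single j' 1)

lemma qT_single (j : σ) (c : Rᵐᵒᵖ) : qT (Finsupp.single j c) = c • tP qT j := by
  rw [single_eq_smul_single, map_smul, tP]

lemma qE_single (j' : σ') (s : Sᵐᵒᵖ) : qE (Finsupp.single j' s) = s • eP qE j' := by
  rw [single_eq_smul_single, map_smul, eP]

/-- Inclusion of the `j`-th copy of the free module. -/
def ψ (j : σ) : (σ' →₀ Sᵐᵒᵖ) →ₗ[Sᵐᵒᵖ] (σ × σ' →₀ Sᵐᵒᵖ) :=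
  Finsupp.lmapDomain Sᵐᵒᵖ Sᵐᵒᵖ fun j' => ((j, j') : σ × σ')

lemma ψ_single (j : σ) (j' : σ') (s : Sᵐᵒᵖ) :
    ψ (σ := σ) j (Finsupp.single j' s) = Finsupp.single (j, j') s := by
  simp [ψ, Finsupp.lmapDomain_apply, Finsupp.mapDomain_single]

variable {qE} in
/-- Generators of the relation module of `T ⊗_R E`. -/
def gens (hqE : Surjective qE) : (σ × ι') ⊕ (ι × σ') → (σ × σ' →₀ Sᵐᵒᵖ)
  | .inl (j, i') => ψ j (g (Finsupp.single i' 1))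
  | .inr (i, j') => (f (Finsupp.single i 1)).sum fun j r =>
      ψ j (surjInv hqE (r.unop • eP qE j'))

variable {qE} in
/-- The relation submodule. -/
def K (hqE : Surjective qE) : Submodule Sᵐᵒᵖ (σ × σ' →₀ Sᵐᵒᵖ) :=
  Submodule.span Sᵐᵒᵖ (Set.range (gens f g hqE))

variable {qE f g} in
lemma psi_mem_K (hqE : Surjective qE) (hkerE : LinearMap.ker qE = LinearMap.range g)
    (j : σ) {u : σ' →₀ Sᵐᵒᵖ} (hu : u ∈ LinearMap.ker qE) :
    ψ j u ∈ K f g hqE := by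
  rw [hkerE] at hu
  obtain ⟨v, rfl⟩ := hu
  induction v using Finsupp.induction_linear with
  | zero => simp
  | add u v hu hv => rw [map_add, map_add]; exact add_mem hu hv
  | single i' s =>
      rw [single_eq_smul_single, map_smul, map_smul]
      exact Submodule.smul_mem _ s
        (Submodule.subset_span ⟨Sum.inl (j, i'), rfl⟩)

/-- The canonical surjection onto `T ⊗_R E`. -/
def Φ : (σ × σ' →₀ Sᵐᵒᵖ) →ₗ[Sᵐᵒᵖ] NCT.Tens R T E :=
  Finsupp.linearCombination Sᵐᵒᵖ fun p => NCT.mk (R := R) (tP qT p.1 ⊗ₜ[ℤ] eP qE p.2)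

lemma Φ_single (p : σ × σ') (s : Sᵐᵒᵖ) :
    Φ qT qE (Finsupp.single p s) = NCT.mk (R := R) (tP qT p.1 ⊗ₜ[ℤ] (s • eP qE p.2)) := by
  rw [Φ, Finsupp.linearCombination_single, smul_mk_tmul]

lemma Φ_psi (j : σ) (u : σ' →₀ Sᵐᵒᵖ) :
    Φ qT qE (ψ j u) = NCT.mk (R := R) (tP qT j ⊗ₜ[ℤ] qE u) := by
  induction u using Finsupp.induction_linear with
  | zero => simp [TensorProduct.tmul_zero]
  | add u v hu hv =>
      rw [map_add, map_add, map_add, hu, hv, TensorProduct.tmul_add, map_add]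
  | single j' s => rw [ψ_single, Φ_single, qE_single]

variable {qT qE} in
lemma mk_base_mem (hqE : Surjective qE) (j : σ) (n : E) :
    NCT.mk (R := R) (tP qT j ⊗ₜ[ℤ] n) ∈ LinearMap.range (Φ qT qE) := by
  obtain ⟨u, rfl⟩ := hqE n
  induction u using Finsupp.induction_linear with
  | zero => simp [TensorProduct.tmul_zero]
  | add u v hu hv =>
      rw [map_add, TensorProduct.tmul_add, map_add]; exact add_mem hu hv
  | single j' s =>
      exact ⟨Finsupp.single (j, j') s, (Φ_single qT qE (j, j') s).trans (by rw [qE_single])⟩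

variable {qT qE} in
lemma Φ_surjective (hqT : Surjective qT) (hqE : Surjective qE) :
    Surjective (Φ qT qE) := by
  intro x
  obtain ⟨y, rfl⟩ := NCT.mk_surjective x
  suffices h : NCT.mk (R := R) y ∈ LinearMap.range (Φ qT qE) from h
  induction y with
  | zero => simp
  | add y z hy hz => rw [map_add]; exact add_mem hy hz
  | tmul m n =>
      obtain ⟨u, rfl⟩ := hqT m
      induction u using Finsupp.induction_linear with
      | zero => simp [TensorProduct.zero_tmul]
      | add u v hu hv =>
          rw [map_add, TensorProduct.add_tmul, map_add]; exact add_mem hu hv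
      | single j c =>
          rw [qT_single, ← op_unop c, mk_rel]
          exact mk_base_mem hqE j _

variable {qE f g} in
lemma mkQ_psi_eq (hqE : Surjective qE) (hkerE : LinearMap.ker qE = LinearMap.range g)
    (j : σ) {u u' : σ' →₀ Sᵐᵒᵖ} (h : qE u = qE u') :
    (Submodule.Quotient.mk (ψ j u) : _ ⧸ K f g hqE) = Submodule.Quotient.mk (ψ j u') := by
  rw [Submodule.Quotient.eq, ← map_sub]
  exact psi_mem_K hqE hkerE j (by simp [LinearMap.mem_ker, map_sub, h])

variable {qE} in
/-- The map `E → F/K` induced by `ψ j` via well-definedness. -/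
def lam (hqE : Surjective qE) (hkerE : LinearMap.ker qE = LinearMap.range g) (j : σ) :
    E →ₗ[Sᵐᵒᵖ] ((σ × σ' →₀ Sᵐᵒᵖ) ⧸ K f g hqE) where
  toFun e := Submodule.Quotient.mk (ψ j (surjInv hqE e))
  map_add' e e' := by
    rw [← Submodule.Quotient.mk_add, ← map_add]
    exact mkQ_psi_eq hqE hkerE j (by simp [surjInv_eq hqE])
  map_smul' s e := by
    rw [RingHom.id_apply, ← Submodule.Quotient.mk_smul, ← map_smul]
    exact mkQ_psi_eq hqE hkerE j (by simp [surjInv_eq hqE])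

variable {qE f g} in
lemma lam_spec (hqE : Surjective qE) (hkerE : LinearMap.ker qE = LinearMap.range g)
    (j : σ) (u : σ' →₀ Sᵐᵒᵖ) :
    lam f g hqE hkerE j (qE u) = Submodule.Quotient.mk (ψ j u) :=
  mkQ_psi_eq hqE hkerE j (surjInv_eq hqE _)

variable {qE} in
/-- The balanced bilinear map on the free covering module. -/
def bfun (hqE : Surjective qE) (hkerE : LinearMap.ker qE = LinearMap.range g)
    (u : σ →₀ Rᵐᵒᵖ) (e : E) : (σ × σ' →₀ Sᵐᵒᵖ) ⧸ K f g hqE :=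
  u.sum fun j r => lam f g hqE hkerE j (r.unop • e)

variable {qE f g} in
lemma b_zero_left (hqE : Surjective qE) (hkerE : LinearMap.ker qE = LinearMap.range g)
    (e : E) : bfun f g hqE hkerE 0 e = 0 := rfl

variable {qE f g} in
lemma b_term_zero (hqE : Surjective qE) (hkerE : LinearMap.ker qE = LinearMap.range g)
    (e : E) (j : σ) : lam f g hqE hkerE j ((0 : Rᵐᵒᵖ).unop • e) = 0 := by
  simp

variable {qE f g} in
lemma b_add_left (hqE : Surjective qE) (hkerE : LinearMap.ker qE = LinearMap.range g)
    (u v : σ →₀ Rᵐᵒᵖ) (e : E) :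
    bfun f g hqE hkerE (u + v) e = bfun f g hqE hkerE u e + bfun f g hqE hkerE v e := by
  refine Finsupp.sum_add_index' (fun j => b_term_zero hqE hkerE e j) fun j r₁ r₂ => ?_
  rw [MulOpposite.unop_add, add_smul, map_add]

variable {qE f g} in
lemma b_zero_right (hqE : Surjective qE) (hkerE : LinearMap.ker qE = LinearMap.range g)
    (u : σ →₀ Rᵐᵒᵖ) : bfun f g hqE hkerE u 0 = 0 := by
  simp [bfun]

variable {qE f g} in
lemma b_add_right (hqE : Surjective qE) (hkerE : LinearMap.ker qE = LinearMap.range g)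
    (u : σ →₀ Rᵐᵒᵖ) (e e' : E) :
    bfun f g hqE hkerE u (e + e') = bfun f g hqE hkerE u e + bfun f g hqE hkerE u e' := by
  rw [bfun, bfun, bfun, ← Finsupp.sum_add]
  exact Finsupp.sum_congr fun j _ => by rw [smul_add, map_add]

variable {qE f g} in
lemma b_smul_op (hqE : Surjective qE) (hkerE : LinearMap.ker qE = LinearMap.range g)
    (c : Rᵐᵒᵖ) (u : σ →₀ Rᵐᵒᵖ) (e : E) :
    bfun f g hqE hkerE (c • u) e = bfun f g hqE hkerE u (c.unop • e) := by
  rw [bfun, Finsupp.sum_smul_index' (fun j => b_term_zero hqE hkerE e j)]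
  exact Finsupp.sum_congr fun j _ => by
    rw [smul_eq_mul, MulOpposite.unop_mul, mul_smul]

variable {qE f g} in
lemma b_smul_S (hqE : Surjective qE) (hkerE : LinearMap.ker qE = LinearMap.range g)
    (s : Sᵐᵒᵖ) (u : σ →₀ Rᵐᵒᵖ) (e : E) :
    bfun f g hqE hkerE u (s • e) = s • bfun f g hqE hkerE u e := by
  rw [bfun, bfun, Finsupp.smul_sum]
  exact Finsupp.sum_congr fun j _ => by rw [smul_comm, map_smul]

variable {qE f g} in
lemma b_f_single (hqE : Surjective qE) (hkerE : LinearMap.ker qE = LinearMap.range g)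
    (i : ι) (j' : σ') :
    bfun f g hqE hkerE (f (Finsupp.single i 1)) (eP qE j') = 0 := by
  have : bfun f g hqE hkerE (f (Finsupp.single i 1)) (eP qE j')
      = Submodule.Quotient.mk ((f (Finsupp.single i 1)).sum fun j r =>
          ψ j (surjInv hqE (r.unop • eP qE j'))) := by
    rw [bfun, ← Submodule.mkQ_apply, map_finsuppSum]
    rfl
  rw [this, Submodule.Quotient.mk_eq_zero]
  exact Submodule.subset_span ⟨Sum.inr (i, j'), rfl⟩

variable {qE f g} in
lemma b_f_single_any (hqE : Surjective qE) (hkerE : LinearMap.ker qE = LinearMap.range g)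
    (i : ι) (e : E) :
    bfun f g hqE hkerE (f (Finsupp.single i 1)) e = 0 := by
  obtain ⟨u, rfl⟩ := hqE e
  induction u using Finsupp.induction_linear with
  | zero => rw [map_zero]; exact b_zero_right hqE hkerE _
  | add u v hu hv => rw [map_add, b_add_right hqE hkerE, hu, hv, add_zero]
  | single j' s =>
      rw [qE_single qE, b_smul_S hqE hkerE, b_f_single hqE hkerE, smul_zero]

variable {qE f g} in
lemma b_f_zero (hqE : Surjective qE) (hkerE : LinearMap.ker qE = LinearMap.range g)
    (v : ι →₀ Rᵐᵒᵖ) (e : E) :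
    bfun f g hqE hkerE (f v) e = 0 := by
  induction v using Finsupp.induction_linear generalizing e with
  | zero => rw [map_zero]; exact b_zero_left hqE hkerE e
  | add u v hu hv => rw [map_add, b_add_left hqE hkerE, hu, hv, add_zero]
  | single i c =>
      rw [single_eq_smul_single, map_smul, b_smul_op hqE hkerE,
        b_f_single_any hqE hkerE]

variable {qT qE f g} in
lemma b_wd (hqT : Surjective qT) (hkerT : LinearMap.ker qT = LinearMap.range f)
    (hqE : Surjective qE) (hkerE : LinearMap.ker qE = LinearMap.range g)
    {u u' : σ →₀ Rᵐᵒᵖ} (h : qT u = qT u') (e : E) :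
    bfun f g hqE hkerE u e = bfun f g hqE hkerE u' e := by
  have hmem : u - u' ∈ LinearMap.range f := by
    rw [← hkerT, LinearMap.mem_ker, map_sub, h, sub_self]
  obtain ⟨v, hv⟩ := hmem
  have hsplit : u = u' + f v := by rw [hv]; abel
  rw [hsplit, b_add_left hqE hkerE, b_f_zero hqE hkerE, add_zero]

variable {qT qE f g} in
/-- The bilinear map on `T × E` obtained by descending `bfun`. -/
def BT (hqT : Surjective qT) (hkerT : LinearMap.ker qT = LinearMap.range f)
    (hqE : Surjective qE) (hkerE : LinearMap.ker qE = LinearMap.range g) :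
    T →+ E →+ ((σ × σ' →₀ Sᵐᵒᵖ) ⧸ K f g hqE) :=
  AddMonoidHom.mk'
    (fun t => AddMonoidHom.mk' (fun e => bfun f g hqE hkerE (surjInv hqT t) e)
      (fun e e' => b_add_right hqE hkerE _ e e'))
    (fun t t' => by
      ext e
      show bfun f g hqE hkerE (surjInv hqT (t + t')) e
        = bfun f g hqE hkerE (surjInv hqT t) e + bfun f g hqE hkerE (surjInv hqT t') e
      rw [← b_add_left hqE hkerE]
      exact b_wd hqT hkerT hqE hkerE (by simp [surjInv_eq hqT]) e)

variable {qT qE f g} in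
lemma BT_spec (hqT : Surjective qT) (hkerT : LinearMap.ker qT = LinearMap.range f)
    (hqE : Surjective qE) (hkerE : LinearMap.ker qE = LinearMap.range g)
    (u : σ →₀ Rᵐᵒᵖ) (e : E) :
    BT hqT hkerT hqE hkerE (qT u) e = bfun f g hqE hkerE u e :=
  b_wd hqT hkerT hqE hkerE (surjInv_eq hqT _) e

variable {qT qE f g} in
lemma BT_balanced (hqT : Surjective qT) (hkerT : LinearMap.ker qT = LinearMap.range f)
    (hqE : Surjective qE) (hkerE : LinearMap.ker qE = LinearMap.range g)
    (r : R) (t : T) (e : E) :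
    BT hqT hkerT hqE hkerE (op r • t) e = BT hqT hkerT hqE hkerE t (r • e) := by
  obtain ⟨u, rfl⟩ := hqT t
  rw [← map_smul, BT_spec hqT hkerT, BT_spec hqT hkerT]
  have : (op r • u : σ →₀ Rᵐᵒᵖ) = (op r) • u := rfl
  rw [b_smul_op hqE hkerE, MulOpposite.unop_op]

variable {qT qE f g} in
lemma BT_smul_S (hqT : Surjective qT) (hkerT : LinearMap.ker qT = LinearMap.range f)
    (hqE : Surjective qE) (hkerE : LinearMap.ker qE = LinearMap.range g)
    (s : Sᵐᵒᵖ) (t : T) (e : E) :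
    BT hqT hkerT hqE hkerE t (s • e) = s • BT hqT hkerT hqE hkerE t e :=
  b_smul_S hqE hkerE s _ e

variable {qT qE f g} in
/-- The induced additive map on the `ℤ`-tensor product. -/
def phiZ (hqT : Surjective qT) (hkerT : LinearMap.ker qT = LinearMap.range f)
    (hqE : Surjective qE) (hkerE : LinearMap.ker qE = LinearMap.range g) :
    (T ⊗[ℤ] E) →+ ((σ × σ' →₀ Sᵐᵒᵖ) ⧸ K f g hqE) :=
  TensorProduct.liftAddHom (BT hqT hkerT hqE hkerE) (fun z t e => by
    have h1 : (z • (BT hqT hkerT hqE hkerE) t) e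
        = z • (BT hqT hkerT hqE hkerE) t e := rfl
    rw [AddMonoidHom.map_zsmul, h1,
      ← map_zsmul ((BT hqT hkerT hqE hkerE) t) z e])

variable {qT qE f g} in
lemma phiZ_tmul (hqT : Surjective qT) (hkerT : LinearMap.ker qT = LinearMap.range f)
    (hqE : Surjective qE) (hkerE : LinearMap.ker qE = LinearMap.range g)
    (t : T) (e : E) :
    phiZ hqT hkerT hqE hkerE (t ⊗ₜ[ℤ] e) = BT hqT hkerT hqE hkerE t e :=
  TensorProduct.liftAddHom_tmul _ _ t e

variable {qT qE f g} in
/-- The induced additive map on the balanced tensor product. -/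
def beta (hqT : Surjective qT) (hkerT : LinearMap.ker qT = LinearMap.range f)
    (hqE : Surjective qE) (hkerE : LinearMap.ker qE = LinearMap.range g) :
    NCT.Tens R T E →+ ((σ × σ' →₀ Sᵐᵒᵖ) ⧸ K f g hqE) :=
  QuotientAddGroup.lift (NCT.rel R T E) (phiZ hqT hkerT hqE hkerE) (by
    intro x hx
    refine (AddSubgroup.closure_le (AddMonoidHom.ker _)).2 ?_ hx
    rintro _ ⟨r, m, n, rfl⟩
    simp only [SetLike.mem_coe, AddMonoidHom.mem_ker, map_sub, phiZ_tmul, sub_eq_zero]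
    exact BT_balanced hqT hkerT hqE hkerE r m n)

variable {qT qE f g} in
lemma beta_mk (hqT : Surjective qT) (hkerT : LinearMap.ker qT = LinearMap.range f)
    (hqE : Surjective qE) (hkerE : LinearMap.ker qE = LinearMap.range g)
    (y : T ⊗[ℤ] E) :
    beta hqT hkerT hqE hkerE (NCT.mk (R := R) y) = phiZ hqT hkerT hqE hkerE y := rfl

variable {qT qE f g} in
lemma beta_smul (hqT : Surjective qT) (hkerT : LinearMap.ker qT = LinearMap.range f)
    (hqE : Surjective qE) (hkerE : LinearMap.ker qE = LinearMap.range g)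
    (s : Sᵐᵒᵖ) (x : NCT.Tens R T E) :
    beta hqT hkerT hqE hkerE (s • x) = s • beta hqT hkerT hqE hkerE x := by
  obtain ⟨y, rfl⟩ := NCT.mk_surjective x
  rw [smul_mk, beta_mk, beta_mk]
  induction y with
  | zero => simp
  | add y z hy hz => rw [map_add, map_add, map_add, hy, hz, smul_add]
  | tmul m n =>
      rw [intMap_rm_tmul, phiZ_tmul hqT hkerT, phiZ_tmul hqT hkerT,
        BT_smul_S hqT hkerT hqE hkerE]

variable {qT qE f g} in
lemma K_le_ker (hqE : Surjective qE) (hkerT : LinearMap.ker qT = LinearMap.range f)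
    (hkerE : LinearMap.ker qE = LinearMap.range g) :
    K f g hqE ≤ LinearMap.ker (Φ qT qE) := by
  rw [K, Submodule.span_le]
  rintro _ ⟨p, rfl⟩
  rcases p with ⟨j, i'⟩ | ⟨i, j'⟩
  · simp only [SetLike.mem_coe, LinearMap.mem_ker, gens, Φ_psi]
    have h0 : qE (g (Finsupp.single i' 1)) = 0 := by
      rw [← LinearMap.mem_ker, hkerE]; exact ⟨_, rfl⟩
    rw [h0, TensorProduct.tmul_zero, map_zero]
  · simp only [SetLike.mem_coe, LinearMap.mem_ker, gens]
    rw [map_finsuppSum]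
    set h : T →+ NCT.Tens R T E :=
      (NCT.mk (R := R)).comp ((TensorProduct.mk ℤ T E).flip (eP qE j')).toAddMonoidHom with hh
    have hterm : ∀ (j : σ) (r : Rᵐᵒᵖ),
        Φ qT qE (ψ j (surjInv hqE (r.unop • eP qE j'))) = h (qT (Finsupp.single j r)) := by
      intro j r
      rw [Φ_psi, surjInv_eq hqE, ← mk_rel, op_unop, qT_single]
      rfl
    have hker : qT (f (Finsupp.single i 1)) = 0 := by
      rw [← LinearMap.mem_ker, hkerT]; exact ⟨_, rfl⟩
    calc (f (Finsupp.single i 1)).sum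
          (fun j r => Φ qT qE (ψ j (surjInv hqE (r.unop • eP qE j'))))
        = (f (Finsupp.single i 1)).sum fun j r => h (qT (Finsupp.single j r)) :=
          Finsupp.sum_congr fun j _ => hterm j _
      _ = h (qT ((f (Finsupp.single i 1)).sum fun j r => Finsupp.single j r)) := by
          rw [map_finsuppSum, map_finsuppSum]
      _ = 0 := by rw [Finsupp.sum_single, hker, map_zero]

variable {qT qE f g} in
lemma beta_Phi (hqT : Surjective qT) (hkerT : LinearMap.ker qT = LinearMap.range f)
    (hqE : Surjective qE) (hkerE : LinearMap.ker qE = LinearMap.range g)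
    (x : σ × σ' →₀ Sᵐᵒᵖ) :
    beta hqT hkerT hqE hkerE (Φ qT qE x) = Submodule.Quotient.mk x := by
  induction x using Finsupp.induction_linear with
  | zero => simp
  | add u v hu hv => rw [map_add, map_add, hu, hv, ← Submodule.Quotient.mk_add]
  | single p s =>
      rcases p with ⟨j, j'⟩
      rw [Φ, Finsupp.linearCombination_single, beta_smul hqT hkerT hqE hkerE, beta_mk,
        phiZ_tmul hqT hkerT hqE hkerE]
      have h1 : BT hqT hkerT hqE hkerE (tP qT j) (eP qE j')
          = Submodule.Quotient.mk (Finsupp.single ((j, j') : σ × σ') (1 : Sᵐᵒᵖ)) := by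
        rw [tP, BT_spec hqT hkerT hqE hkerE,
          bfun, Finsupp.sum_single_index (b_term_zero hqE hkerE _ j),
          unop_one, one_smul, eP, lam_spec hqE hkerE, ψ_single]
      rw [h1, ← Submodule.Quotient.mk_smul, smul_single', mul_one]

variable {qT qE f g} in
lemma ker_Φ_eq (hqT : Surjective qT) (hkerT : LinearMap.ker qT = LinearMap.range f)
    (hqE : Surjective qE) (hkerE : LinearMap.ker qE = LinearMap.range g) :
    LinearMap.ker (Φ qT qE) = K f g hqE := by
  refine le_antisymm (fun x hx => ?_) (K_le_ker hqE hkerT hkerE)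
  have h := beta_Phi hqT hkerT hqE hkerE x
  rw [LinearMap.mem_ker.1 hx, map_zero] at h
  exact (Submodule.Quotient.mk_eq_zero _).1 h.symm

end TensAux

/-- **Tensor products of `κ`-presentable modules are `κ`-presentable.**
Let `R` and `S` be rings, `T` a right `R`-module, `E` an `R`-`S`-bimodule, and `κ` a
regular cardinal.  If `T` is `κ`-presentable as a right `R`-module and `E` is
`κ`-presentable as a right `S`-module, then the right `S`-module `T ⊗_R E` is
`κ`-presentable. -/
theorem tensor_kappa_presentable
    (R : Type u) [Ring R] (S : Type u) [Ring S]
    (T : Type u) [AddCommGroup T] [Module Rᵐᵒᵖ T]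
    (E : Type u) [AddCommGroup E] [Module R E] [Module Sᵐᵒᵖ E] [SMulCommClass R Sᵐᵒᵖ E]
    (κ : Cardinal.{u}) (hκ : κ.IsRegular)
    (hT : IsKappaPresentableMod κ Rᵐᵒᵖ T)
    (hE : IsKappaPresentableMod κ Sᵐᵒᵖ E) :
    IsKappaPresentableMod κ Sᵐᵒᵖ (NCT.Tens R T E) := by
  classical
  obtain ⟨ι, σ, hι, hσ, f, ⟨eT⟩⟩ := hT
  obtain ⟨ι', σ', hι', hσ', g, ⟨eE⟩⟩ := hE
  set qT : (σ →₀ Rᵐᵒᵖ) →ₗ[Rᵐᵒᵖ] T :=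
    (eT.symm.toLinearMap).comp (LinearMap.range f).mkQ with hqTdef
  set qE : (σ' →₀ Sᵐᵒᵖ) →ₗ[Sᵐᵒᵖ] E :=
    (eE.symm.toLinearMap).comp (LinearMap.range g).mkQ with hqEdef
  have hqT : Function.Surjective qT :=
    (EquivLike.surjective eT.symm).comp (Submodule.mkQ_surjective _)
  have hqE : Function.Surjective qE :=
    (EquivLike.surjective eE.symm).comp (Submodule.mkQ_surjective _)
  have hkerT : LinearMap.ker qT = LinearMap.range f := by
    rw [hqTdef, LinearMap.ker_comp, LinearEquiv.ker, Submodule.comap_bot, Submodule.ker_mkQ]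
  have hkerE : LinearMap.ker qE = LinearMap.range g := by
    rw [hqEdef, LinearMap.ker_comp, LinearEquiv.ker, Submodule.comap_bot, Submodule.ker_mkQ]
  refine ⟨(σ × ι') ⊕ (ι × σ'), σ × σ', ?_, ?_,
    Finsupp.linearCombination Sᵐᵒᵖ (TensAux.gens f g hqE), ?_⟩
  · simp only [Cardinal.mk_sum, Cardinal.mk_prod, Cardinal.lift_id]
    exact Cardinal.add_lt_of_lt hκ.aleph0_le
      (Cardinal.mul_lt_of_lt hκ.aleph0_le hσ hι')
      (Cardinal.mul_lt_of_lt hκ.aleph0_le hι hσ')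
  · simp only [Cardinal.mk_prod, Cardinal.lift_id]
    exact Cardinal.mul_lt_of_lt hκ.aleph0_le hσ hσ'
  · have hrange : LinearMap.range (Finsupp.linearCombination Sᵐᵒᵖ (TensAux.gens f g hqE))
        = LinearMap.ker (TensAux.Φ qT qE) := by
      rw [Finsupp.range_linearCombination, TensAux.ker_Φ_eq hqT hkerT hqE hkerE, TensAux.K]
    exact ⟨((TensAux.Φ qT qE).quotKerEquivOfSurjective
        (TensAux.Φ_surjective hqT hqE)).symm.trans
      (Submodule.quotEquivOfEq _ _ hrange.symm)⟩
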